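/- Every connected graph of even order contains a spanning subgraph H such that every vertex has odd degree in H and the edge-complement G − E(H) is acyclic. -/

import Mathlib

open SimpleGraph Finset
open scoped symmDiff

variable {V : Type*} [Fintype V] [DecidableEq V]

/-- Number of edges incident to `v` receiving color `i` under the edge-coloring `f`. -/
def colorCount (G : SimpleGraph V) [DecidableRel G.Adj] {k : ℕ}
    (f : Sym2 V → Fin k) (v : V) (i : Fin k) : ℕ :=
  ((G.incidenceFinset v).filter (fun e => f e = i)).card

/-- The edge-coloring `f` is odd at the vertex `v`: every color appearing at `v`
appears an odd number of times at `v`. -/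
def OddAt (G : SimpleGraph V) [DecidableRel G.Adj] {k : ℕ}
    (f : Sym2 V → Fin k) (v : V) : Prop :=
  ∀ i : Fin k, colorCount G f v i = 0 ∨ Odd (colorCount G f v i)

/-- An odd edge-coloring: odd at every vertex. -/
def IsOddColoring (G : SimpleGraph V) [DecidableRel G.Adj] {k : ℕ}
    (f : Sym2 V → Fin k) : Prop :=
  ∀ v : V, OddAt G f v

/-- The odd chromatic index: least `k` admitting an odd `k`-edge-coloring. -/
noncomputable def oddChromIndex (G : SimpleGraph V) [DecidableRel G.Adj] : ℕ :=
  sInf {k | ∃ f : Sym2 V → Fin k, IsOddColoring G f}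

set_option linter.unusedSectionVars false

private def cnt (A : Finset (Sym2 V)) (v : V) : ℕ := (A.filter (fun e => v ∈ e)).card

private lemma card_symmDiff_odd {α : Type*} [DecidableEq α] (X Y : Finset α) :
    Odd (X ∆ Y).card ↔ (Odd X.card ↔ ¬ Odd Y.card) := by
  have h1 : (X ∆ Y).card = (X \ Y).card + (Y \ X).card := by
    rw [symmDiff_def]
    exact Finset.card_union_of_disjoint (disjoint_sdiff_sdiff)
  have h2 := Finset.card_sdiff_add_card_inter X Y
  have h3 := Finset.card_sdiff_add_card_inter Y X
  rw [Finset.inter_comm] at h3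
  simp only [Nat.odd_iff] at *
  omega

private lemma cnt_symmDiff_odd (A B : Finset (Sym2 V)) (v : V) :
    Odd (cnt (A ∆ B) v) ↔ (Odd (cnt A v) ↔ ¬ Odd (cnt B v)) := by
  have h : (A ∆ B).filter (fun e => v ∈ e) =
      (A.filter (fun e => v ∈ e)) ∆ (B.filter (fun e => v ∈ e)) := by
    ext e
    simp only [Finset.mem_filter, Finset.mem_symmDiff]
    tauto
  rw [cnt, h, card_symmDiff_odd]
  rfl

private lemma cnt_insert {A : Finset (Sym2 V)} {e : Sym2 V} (he : e ∉ A) (v : V) :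
    cnt (insert e A) v = cnt A v + (if v ∈ e then 1 else 0) := by
  rw [cnt, Finset.filter_insert]
  split <;> rename_i hv
  · rw [Finset.card_insert_of_notMem (fun h => he (Finset.mem_filter.1 h).1)]
    simp [hv, cnt]
  · simp [hv, cnt]

set_option linter.unusedSectionVars false

private lemma mem_support_of_mem_edges' {G : SimpleGraph V} {u v w : V} (p : G.Walk u v)
    {e : Sym2 V} (he : e ∈ p.edges) (hw : w ∈ e) : w ∈ p.support := by
  induction e with
  | h x y =>
    rcases Sym2.mem_iff.1 hw with rfl | rfl
    · exact p.fst_mem_support_of_mem_edges he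
    · exact p.snd_mem_support_of_mem_edges he

private lemma path_cnt_odd {G : SimpleGraph V} {u v : V} (p : G.Walk u v) (hp : p.IsPath)
    (w : V) : Odd (cnt p.edges.toFinset w) ↔ (w = u ∨ w = v) ∧ u ≠ v := by
  induction p with
  | nil => simp [cnt]
  | @cons u b v h q ih =>
    rw [SimpleGraph.Walk.cons_isPath_iff] at hp
    obtain ⟨hq, hus⟩ := hp
    have hub : u ≠ b := h.ne
    have huv : u ≠ v := fun h' => hus (h' ▸ q.end_mem_support)
    have hnotmem : s(u, b) ∉ q.edges.toFinset := fun h' =>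
      hus (q.fst_mem_support_of_mem_edges (List.mem_toFinset.1 h'))
    have hcons : cnt (Walk.cons h q).edges.toFinset w
        = cnt q.edges.toFinset w + (if w ∈ s(u, b) then 1 else 0) := by
      rw [SimpleGraph.Walk.edges_cons, List.toFinset_cons, cnt_insert hnotmem]
    have hqu : cnt q.edges.toFinset u = 0 := by
      rw [cnt, Finset.card_eq_zero, Finset.filter_eq_empty_iff]
      intro e he hu
      exact hus (mem_support_of_mem_edges' q (List.mem_toFinset.1 he) hu)
    rw [hcons]
    by_cases hwu : w = u
    · subst hwu
      simp [hqu, Sym2.mem_iff, huv]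
    · by_cases hwb : w = b
      · subst hwb
        have hbv : w = v → u ≠ v := fun h' => h' ▸ hub
        simp only [Sym2.mem_iff, hwu, or_true, if_pos, Nat.odd_add_one, ih hq]
        constructor
        · intro hodd
          have : w = v := by tauto
          exact ⟨Or.inr this, hbv this⟩
        · rintro ⟨hor, -⟩
          have : w = v := by tauto
          simp [this]
      · have : ¬ (w ∈ s(u, b)) := by simp [Sym2.mem_iff, hwu, hwb]
        rw [if_neg this, Nat.add_zero, ih hq]
        constructor
        · rintro ⟨hor, hbv⟩
          have hwv : w = v := by tauto
          exact ⟨Or.inr hwv, fun h' => hwu (hwv.trans h'.symm)⟩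
        · rintro ⟨hor, huv'⟩
          have hwv : w = v := by tauto
          exact ⟨Or.inr hwv, fun h' => hwb (hwv.trans h'.symm)⟩

private lemma tjoin {G : SimpleGraph V} (hG : G.Preconnected) :
    ∀ (n : ℕ) (S : Finset V), S.card = n → Even n →
    ∃ A : Finset (Sym2 V), (↑A : Set (Sym2 V)) ⊆ G.edgeSet ∧
      ∀ w, (Odd (cnt A w) ↔ w ∈ S) := by
  intro n
  induction n using Nat.strong_induction_on with
  | _ n ih =>
    intro S hcard heven
    rcases Nat.eq_zero_or_pos n with rfl | hpos
    · refine ⟨∅, by simp, ?_⟩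
      rw [Finset.card_eq_zero] at hcard
      subst hcard
      simp [cnt]
    · obtain ⟨u, hu⟩ := Finset.card_pos.1 (hcard ▸ hpos)
      have h2 : 2 ≤ n := by
        rcases heven with ⟨k, hk⟩; omega
      have herase : (S.erase u).card = n - 1 := by
        rw [Finset.card_erase_of_mem hu, hcard]
      obtain ⟨v, hv⟩ := Finset.card_pos.1 (by omega : 0 < (S.erase u).card)
      obtain ⟨hvu, hvS⟩ := Finset.mem_erase.1 hv
      have huv : u ≠ v := fun h => hvu h.symm
      obtain ⟨q, hqpath⟩ := ((hG u v).some).toPath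
      have herase2 : ((S.erase u).erase v).card = n - 2 := by
        rw [Finset.card_erase_of_mem hv, herase]; omega
      obtain ⟨A', hA'sub, hA'⟩ := ih (n - 2) (by omega) ((S.erase u).erase v) herase2
        (by rcases heven with ⟨k, hk⟩; exact ⟨k - 1, by omega⟩)
      refine ⟨A' ∆ q.edges.toFinset, ?_, ?_⟩
      · intro e he
        rcases Finset.mem_symmDiff.1 he with ⟨h1, -⟩ | ⟨h1, -⟩
        · exact hA'sub h1
        · exact q.edges_subset_edgeSet (List.mem_toFinset.1 h1)
      · intro w
        rw [cnt_symmDiff_odd, hA' w, path_cnt_odd q hqpath w]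
        simp only [Finset.mem_erase]
        by_cases hwu : w = u
        · subst hwu; simp [huv, hu]
        · by_cases hwv : w = v
          · subst hwv; simp [huv, hvS, hwu]
          · simp [hwu, hwv, huv]

private lemma preconnected_delete {G : SimpleGraph V} (hG : G.Preconnected) {a b : V}
    (hab : (G \ fromEdgeSet {s(a, b)}).Reachable a b) :
    (G \ fromEdgeSet {s(a, b)}).Preconnected := by
  have step : ∀ x y : V, G.Adj x y → (G \ fromEdgeSet {s(a, b)}).Reachable x y := by
    intro x y hxy
    by_cases he : s(x, y) = s(a, b)
    · rcases Sym2.eq_iff.1 he with ⟨rfl, rfl⟩ | ⟨rfl, rfl⟩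
      · exact hab
      · exact hab.symm
    · exact SimpleGraph.Adj.reachable
        ⟨hxy, by simp [fromEdgeSet_adj, he]⟩
  intro x y
  obtain ⟨p⟩ := hG x y
  induction p with
  | nil => exact SimpleGraph.Reachable.refl _
  | cons h q ih => exact (step _ _ h).trans ih

private lemma acyclic_anti {G H : SimpleGraph V} (h : H ≤ G) (hG : G.IsAcyclic) :
    H.IsAcyclic := fun _ c hc => hG (c.mapLe h) (hc.mapLe h)

private lemma main_induction :
    ∀ (n : ℕ) (F : Finset (Sym2 V)), F.card = n →
    (∀ e ∈ F, ¬ e.IsDiag) → (fromEdgeSet (↑F : Set (Sym2 V))).Preconnected →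
    ∀ S : Finset V, Even S.card →
    ∃ A ⊆ F, (∀ w, (Odd (cnt A w) ↔ w ∈ S)) ∧
      (fromEdgeSet (↑(F \ A) : Set (Sym2 V))).IsAcyclic := by
  intro n
  induction n using Nat.strong_induction_on with
  | _ n ih =>
    intro F hFcard hdiag hconn S hS
    have hedge : (fromEdgeSet (↑F : Set (Sym2 V))).edgeSet = ↑F := by
      rw [edgeSet_fromEdgeSet]
      ext e
      simp only [Set.mem_diff, Set.mem_setOf_eq, Finset.mem_coe]
      exact ⟨fun h => h.1, fun h => ⟨h, hdiag e h⟩⟩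
    by_cases hacyc : (fromEdgeSet (↑F : Set (Sym2 V))).IsAcyclic
    · obtain ⟨A, hAsub, hApar⟩ := tjoin hconn S.card S rfl hS
      refine ⟨A, ?_, hApar, ?_⟩
      · intro e he
        have := hAsub (Finset.mem_coe.2 he)
        rw [hedge] at this
        exact this
      · exact acyclic_anti (fromEdgeSet_mono (by
          rw [Finset.coe_sdiff]; exact Set.diff_subset)) hacyc
    · rw [isAcyclic_iff_forall_edge_isBridge] at hacyc
      push_neg at hacyc
      obtain ⟨e, he, hbr⟩ := hacyc
      revert he hbr
      induction e using Sym2.ind with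
      | _ a b =>
        intro he hbr
        have hadj : (fromEdgeSet (↑F : Set (Sym2 V))).Adj a b := he
        have hab : a ≠ b := hadj.ne
        have heF : s(a, b) ∈ F := by
          have := he; rw [hedge] at this; exact this
        have hreach : ((fromEdgeSet (↑F : Set (Sym2 V))) \ fromEdgeSet {s(a, b)}).Reachable a b := by
          rw [isBridge_iff] at hbr
          push_neg at hbr
          exact hbr
        set F' := F.erase s(a, b) with hF'
        have hgraph : fromEdgeSet (↑F' : Set (Sym2 V))
            = (fromEdgeSet (↑F : Set (Sym2 V))) \ fromEdgeSet {s(a, b)} := by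
          rw [← edgeSet_inj, edgeSet_sdiff, edgeSet_fromEdgeSet, edgeSet_fromEdgeSet,
            edgeSet_fromEdgeSet]
          ext x
          simp only [hF', Finset.coe_erase, Set.mem_diff, Set.mem_setOf_eq,
            Set.mem_singleton_iff, Finset.mem_coe]
          constructor
          · rintro ⟨⟨hx, hne⟩, hd⟩
            exact ⟨⟨hx, hd⟩, fun h => hne h.1⟩
          · rintro ⟨⟨hx, hd⟩, hne⟩
            exact ⟨⟨hx, fun h => hne ⟨h, hd⟩⟩, hd⟩
        have hconn' : (fromEdgeSet (↑F' : Set (Sym2 V))).Preconnected := by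
          rw [hgraph]
          exact preconnected_delete hconn hreach
        have hF'card : F'.card = n - 1 := by
          rw [hF', Finset.card_erase_of_mem heF, hFcard]
        have hab2 : ({a, b} : Finset V).card = 2 := by
          rw [Finset.card_insert_of_notMem (by simp [hab]), Finset.card_singleton]
        have hS'even : Even (S ∆ ({a, b} : Finset V)).card := by
          rw [← Nat.not_odd_iff_even, card_symmDiff_odd, hab2]
          rw [← Nat.not_odd_iff_even] at hS
          simp [hS]
        have hnpos : 0 < n := hFcard ▸ Finset.card_pos.2 ⟨_, heF⟩
        obtain ⟨A', hA'F', hA'par, hA'acyc⟩ :=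
          ih (n - 1) (by omega) F' hF'card
            (fun e he' => hdiag e (Finset.mem_of_mem_erase he')) hconn'
            (S ∆ ({a, b} : Finset V)) hS'even
        have heA' : s(a, b) ∉ A' := fun h => (Finset.mem_erase.1 (hA'F' h)).1 rfl
        refine ⟨insert s(a, b) A', ?_, ?_, ?_⟩
        · exact Finset.insert_subset heF (hA'F'.trans (Finset.erase_subset _ _))
        · intro w
          rw [cnt_insert heA' w]
          have hpar := hA'par w
          rw [Finset.mem_symmDiff] at hpar
          by_cases hw : w ∈ s(a, b)
          · rw [if_pos hw, Nat.odd_add_one, hpar]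
            have hwab : w ∈ ({a, b} : Finset V) := by
              rcases Sym2.mem_iff.1 hw with rfl | rfl <;> simp
            tauto
          · rw [if_neg hw, Nat.add_zero, hpar]
            have hwab : w ∉ ({a, b} : Finset V) := by
              intro hc
              rcases Finset.mem_insert.1 hc with rfl | hc
              · exact hw (by simp)
              · exact hw (by simp [Finset.mem_singleton.1 hc])
            tauto
        · have : F \ insert s(a, b) A' = F' \ A' := by
            ext x
            simp only [Finset.mem_sdiff, Finset.mem_insert, hF', Finset.mem_erase]
            tauto
          rw [this]
          exact hA'acyc

theorem exists_spanning_odd_coforest (G : SimpleGraph V) (hG : G.Connected)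
    (hcard : Even (Fintype.card V)) :
    ∃ H : SimpleGraph V, H ≤ G ∧ (∀ v : V, Odd (H.neighborSet v).ncard) ∧
      (G \ H).IsAcyclic := by
  classical
  set F := G.edgeFinset with hF
  have hFcoe : (↑F : Set (Sym2 V)) = G.edgeSet := G.coe_edgeFinset
  have hdiag : ∀ e ∈ F, ¬ e.IsDiag := fun e he =>
    G.not_isDiag_of_mem_edgeSet (by rwa [SimpleGraph.mem_edgeFinset] at he)
  have hfrom : fromEdgeSet (↑F : Set (Sym2 V)) = G := by
    rw [hFcoe, fromEdgeSet_edgeSet]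
  have hconn : (fromEdgeSet (↑F : Set (Sym2 V))).Preconnected := by
    rw [hfrom]; exact hG.preconnected
  have hScard : Even (Finset.univ : Finset V).card := by rwa [Finset.card_univ]
  obtain ⟨A, hAF, hApar, hAacyc⟩ :=
    main_induction F.card F rfl hdiag hconn Finset.univ hScard
  have hHedge : (fromEdgeSet (↑A : Set (Sym2 V))).edgeSet = ↑A := by
    rw [edgeSet_fromEdgeSet]
    ext e
    simp only [Set.mem_diff, Set.mem_setOf_eq, Finset.mem_coe]
    exact ⟨fun h => h.1, fun h => ⟨h, hdiag e (hAF h)⟩⟩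
  refine ⟨fromEdgeSet (↑A : Set (Sym2 V)), ?_, ?_, ?_⟩
  · exact le_of_le_of_eq (fromEdgeSet_mono (Finset.coe_subset.2 hAF)) hfrom
  · intro v
    have hHfin : (fromEdgeSet (↑A : Set (Sym2 V))).edgeFinset = A :=
      Finset.coe_injective (by rw [SimpleGraph.coe_edgeFinset, hHedge])
    rw [← Set.coe_toFinset ((fromEdgeSet (↑A : Set (Sym2 V))).neighborSet v),
      Set.ncard_coe_finset, ← SimpleGraph.neighborFinset_def]
    show Odd ((fromEdgeSet (↑A : Set (Sym2 V))).degree v)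
    rw [← SimpleGraph.card_incidenceFinset_eq_degree,
      SimpleGraph.incidenceFinset_eq_filter, hHfin]
    exact (hApar v).2 (Finset.mem_univ v)
  · have hGH : G \ fromEdgeSet (↑A : Set (Sym2 V)) = fromEdgeSet (↑(F \ A) : Set (Sym2 V)) := by
      rw [← edgeSet_inj, edgeSet_sdiff, hHedge, edgeSet_fromEdgeSet, Finset.coe_sdiff, ← hFcoe]
      ext x
      simp only [Set.mem_diff, Set.mem_setOf_eq, Finset.mem_coe]
      exact ⟨fun ⟨h1, h2⟩ => ⟨⟨h1, h2⟩, hdiag x h1⟩, fun ⟨⟨h1, h2⟩, _⟩ => ⟨h1, h2⟩⟩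
    rw [hGH]
    exact hAacyc
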